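/- Let G be a graph on n vertices, let H_1, …, H_k be subgraphs of pairwise edge-disjoint subgraphs B_1, …, B_k of G whose edge sets partition E(G), and suppose each H_j is an α-matching cover of B_j. Then H := H_1 ∪ ⋯ ∪ H_k satisfies μ(H[X,Y]) ≥ μ(G[X,Y]) − k·α·n for all disjoint vertex subsets X, Y; i.e., H is a (kα)-matching cover of G. -/

import Mathlib

open Finset

section Defs

variable {V : Type*}

/-- A matching in `G`: a finset of edges of `G` that are pairwise vertex-disjoint. -/
def IsMatchingSet (G : SimpleGraph V) (M : Finset (Sym2 V)) : Prop :=
  (∀ e ∈ M, e ∈ G.edgeSet) ∧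
  ∀ e ∈ M, ∀ f ∈ M, e ≠ f → ∀ v : V, v ∈ e → v ∉ f

/-- The maximum matching size `μ(G)`. -/
noncomputable def matchNum (G : SimpleGraph V) : ℕ :=
  sSup {k | ∃ M : Finset (Sym2 V), IsMatchingSet G M ∧ M.card = k}

/-- The bipartite subgraph `G[A,B]`: edges of `G` with one endpoint in `A`
and the other in `B`. -/
def biSub (G : SimpleGraph V) (A B : Finset V) : SimpleGraph V where
  Adj u v := G.Adj u v ∧ ((u ∈ A ∧ v ∈ B) ∨ (u ∈ B ∧ v ∈ A))
  symm := ⟨fun u v h =>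
    ⟨h.1.symm, h.2.elim (fun hh => Or.inr ⟨hh.2, hh.1⟩) (fun hh => Or.inl ⟨hh.2, hh.1⟩)⟩⟩
  loopless := ⟨fun v h => G.loopless.irrefl v h.1⟩

end Defs

section Aux
variable {V : Type*} [Fintype V]

lemma isMatchingSet_empty (G : SimpleGraph V) : IsMatchingSet G (∅ : Finset (Sym2 V)) := by
  constructor <;> simp

lemma matchNum_bddAbove (G : SimpleGraph V) :
    BddAbove {k | ∃ M : Finset (Sym2 V), IsMatchingSet G M ∧ M.card = k} := by
  classical
  refine ⟨Fintype.card (Sym2 V), ?_⟩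
  rintro k ⟨M, _, rfl⟩
  exact Finset.card_le_univ M

lemma le_matchNum {G : SimpleGraph V} {M : Finset (Sym2 V)} (h : IsMatchingSet G M) :
    M.card ≤ matchNum G :=
  le_csSup (matchNum_bddAbove G) ⟨M, h, rfl⟩

lemma exists_max_matching (G : SimpleGraph V) :
    ∃ M : Finset (Sym2 V), IsMatchingSet G M ∧ M.card = matchNum G := by
  have hne : {k | ∃ M : Finset (Sym2 V), IsMatchingSet G M ∧ M.card = k}.Nonempty :=
    ⟨0, ∅, isMatchingSet_empty G, rfl⟩
  exact Nat.sSup_mem hne (matchNum_bddAbove G)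

lemma biSub_edge {G : SimpleGraph V} {A B : Finset V} {e : Sym2 V}
    (he : e ∈ (biSub G A B).edgeSet) :
    ∃ u v, e = s(u, v) ∧ G.Adj u v ∧ u ∈ A ∧ v ∈ B := by
  induction e using Sym2.ind with
  | _ u v =>
    rw [SimpleGraph.mem_edgeSet] at he
    obtain ⟨hadj, h | h⟩ := he
    · exact ⟨u, v, rfl, hadj, h.1, h.2⟩
    · exact ⟨v, u, Sym2.eq_swap, hadj.symm, h.2, h.1⟩

end Aux

/-- If the edge set of `G` is partitioned into edge-disjoint subgraphs `B i`, and each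
`H i ≤ B i` is an `α`-matching cover of `B i`, then the union of the `H i` is a
`k·α`-matching cover of `G`. -/
theorem stmt_12 {V : Type*} [Fintype V] (G : SimpleGraph V) (k : ℕ)
    (B H : Fin k → SimpleGraph V) (α : ℝ)
    (hBdisj : ∀ i j, i ≠ j → Disjoint (B i).edgeSet (B j).edgeSet)
    (hBpart : (⋃ i, (B i).edgeSet) = G.edgeSet)
    (hH : ∀ i, H i ≤ B i)
    (hcov : ∀ i, ∀ A C : Finset V, Disjoint A C →
      (matchNum (biSub (H i) A C) : ℝ) ≥
        (matchNum (biSub (B i) A C) : ℝ) - α * Fintype.card V) :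
    ∀ X Y : Finset V, Disjoint X Y →
      (matchNum (biSub (⨆ i, H i) X Y) : ℝ) ≥
        (matchNum (biSub G X Y) : ℝ) - k * α * Fintype.card V := by
  classical
  intro X Y hXY
  obtain ⟨M, hM, hMcard⟩ := exists_max_matching (biSub G X Y)
  -- decompose M by the B i
  set Mi : Fin k → Finset (Sym2 V) := fun i => M.filter (· ∈ (B i).edgeSet) with hMi
  have hMiSub : ∀ i, Mi i ⊆ M := fun i => Finset.filter_subset _ _
  have hMunion : M = Finset.univ.biUnion Mi := by
    ext e
    simp only [Finset.mem_biUnion, Finset.mem_univ, true_and, hMi, Finset.mem_filter]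
    constructor
    · intro he
      have heG : e ∈ G.edgeSet := by
        obtain ⟨u, v, rfl, hadj, _, _⟩ := biSub_edge (hM.1 e he)
        exact hadj
      rw [← hBpart] at heG
      obtain ⟨i, hi⟩ := Set.mem_iUnion.mp heG
      exact ⟨i, he, hi⟩
    · rintro ⟨i, he, _⟩
      exact he
  have hMidisj : ∀ i j, i ≠ j → Disjoint (Mi i) (Mi j) := by
    intro i j hij
    rw [Finset.disjoint_left]
    intro e hei hej
    simp only [hMi, Finset.mem_filter] at hei hej
    exact (hBdisj i j hij).ne_of_mem hei.2 hej.2 rfl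
  have hMsum : M.card = ∑ i, (Mi i).card := by
    rw [hMunion]
    exact Finset.card_biUnion (fun i _ j _ hij => hMidisj i j hij)
  -- the endpoint sets
  set A : Fin k → Finset V := fun i => X.filter (fun v => ∃ e ∈ Mi i, v ∈ e) with hA
  set C : Fin k → Finset V := fun i => Y.filter (fun v => ∃ e ∈ Mi i, v ∈ e) with hC
  have hAX : ∀ i, A i ⊆ X := fun i => Finset.filter_subset _ _
  have hCY : ∀ i, C i ⊆ Y := fun i => Finset.filter_subset _ _
  have hAC : ∀ i, Disjoint (A i) (C i) := fun i => hXY.mono (hAX i) (hCY i)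
  -- Mi i is a matching in biSub (B i) (A i) (C i)
  have hMimatch : ∀ i, IsMatchingSet (biSub (B i) (A i) (C i)) (Mi i) := by
    intro i
    constructor
    · intro e he
      have heM : e ∈ M := hMiSub i he
      have heB : e ∈ (B i).edgeSet := (Finset.mem_filter.mp he).2
      obtain ⟨u, v, rfl, hadj, hu, hv⟩ := biSub_edge (hM.1 e heM)
      rw [SimpleGraph.mem_edgeSet] at heB ⊢
      have hu' : u ∈ A i := by
        rw [hA, Finset.mem_filter]
        exact ⟨hu, s(u, v), he, by simp⟩
      have hv' : v ∈ C i := by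
        rw [hC, Finset.mem_filter]
        exact ⟨hv, s(u, v), he, by simp⟩
      exact ⟨heB, Or.inl ⟨hu', hv'⟩⟩
    · intro e he f hf hef v hv
      exact hM.2 e (hMiSub i he) f (hMiSub i hf) hef v hv
  -- choose maximum matchings in the H i
  choose N hN hNcard using fun i => exists_max_matching (biSub (H i) (A i) (C i))
  -- vertices of edges of N i are in A i ∪ C i
  have hNvert : ∀ i, ∀ e ∈ N i, ∀ v ∈ e, v ∈ A i ∪ C i := by
    intro i e he v hv
    obtain ⟨a, b, rfl, _, ha, hb⟩ := biSub_edge ((hN i).1 e he)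
    rcases Sym2.mem_iff.mp hv with rfl | rfl
    · exact Finset.mem_union_left _ ha
    · exact Finset.mem_union_right _ hb
  -- the sets A i ∪ C i are pairwise disjoint
  have hACdisj : ∀ i j, i ≠ j → Disjoint (A i ∪ C i) (A j ∪ C j) := by
    intro i j hij
    have key : ∀ v, (∃ e ∈ Mi i, v ∈ e) → (∃ f ∈ Mi j, v ∈ f) → False := by
      rintro v ⟨e, he, hve⟩ ⟨f, hf, hvf⟩
      have hef : e ≠ f := fun h =>
        (Finset.disjoint_left.mp (hMidisj i j hij)) he (h ▸ hf)
      exact hM.2 e (hMiSub i he) f (hMiSub j hf) hef v hve hvf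
    rw [Finset.disjoint_left]
    intro v hvi hvj
    rcases Finset.mem_union.mp hvi with h1 | h1 <;>
      rcases Finset.mem_union.mp hvj with h2 | h2
    · exact key v (Finset.mem_filter.mp h1).2 (Finset.mem_filter.mp h2).2
    · exact Finset.disjoint_left.mp hXY (hAX i h1) (hCY j h2)
    · exact Finset.disjoint_left.mp hXY (hAX j h2) (hCY i h1)
    · exact key v (Finset.mem_filter.mp h1).2 (Finset.mem_filter.mp h2).2
  -- the union of the N i
  set N' : Finset (Sym2 V) := Finset.univ.biUnion N with hN'
  have hNdisj : ∀ i j, i ≠ j → Disjoint (N i) (N j) := by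
    intro i j hij
    rw [Finset.disjoint_left]
    intro e hei hej
    obtain ⟨a, b, rfl, _, ha, _⟩ := biSub_edge ((hN i).1 e hei)
    have h1 : a ∈ A i ∪ C i := Finset.mem_union_left _ ha
    have h2 : a ∈ A j ∪ C j := hNvert j _ hej a (by simp)
    exact Finset.disjoint_left.mp (hACdisj i j hij) h1 h2
  have hN'match : IsMatchingSet (biSub (⨆ i, H i) X Y) N' := by
    constructor
    · intro e he
      obtain ⟨i, _, hei⟩ := Finset.mem_biUnion.mp he
      obtain ⟨u, v, rfl, hadj, hu, hv⟩ := biSub_edge ((hN i).1 e hei)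
      rw [SimpleGraph.mem_edgeSet]
      exact ⟨(le_iSup H i) hadj, Or.inl ⟨hAX i hu, hCY i hv⟩⟩
    · intro e he f hf hef v hve hvf
      obtain ⟨i, _, hei⟩ := Finset.mem_biUnion.mp he
      obtain ⟨j, _, hfj⟩ := Finset.mem_biUnion.mp hf
      rcases eq_or_ne i j with rfl | hij
      · exact (hN i).2 e hei f hfj hef v hve hvf
      · exact Finset.disjoint_left.mp (hACdisj i j hij)
          (hNvert i e hei v hve) (hNvert j f hfj v hvf)
  have hN'card : N'.card = ∑ i, (N i).card := by
    rw [hN']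
    exact Finset.card_biUnion (fun i _ j _ hij => hNdisj i j hij)
  -- put the bounds together
  have hfinal : (N'.card : ℝ) ≥ (M.card : ℝ) - k * α * Fintype.card V := by
    have h1 : ∀ i, ((N i).card : ℝ) ≥ ((Mi i).card : ℝ) - α * Fintype.card V := by
      intro i
      have h2 : ((Mi i).card : ℝ) ≤ (matchNum (biSub (B i) (A i) (C i)) : ℝ) := by
        exact_mod_cast le_matchNum (hMimatch i)
      have h3 := hcov i (A i) (C i) (hAC i)
      rw [hNcard i]
      linarith
    calc (N'.card : ℝ) = ∑ i, ((N i).card : ℝ) := by rw [hN'card]; push_cast; ring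
      _ ≥ ∑ i, (((Mi i).card : ℝ) - α * Fintype.card V) :=
          Finset.sum_le_sum (fun i _ => h1 i)
      _ = (M.card : ℝ) - k * α * Fintype.card V := by
          rw [Finset.sum_sub_distrib, hMsum]
          push_cast
          simp [Finset.card_univ]
          ring
  have hle : (N'.card : ℝ) ≤ (matchNum (biSub (⨆ i, H i) X Y) : ℝ) := by
    exact_mod_cast le_matchNum hN'match
  rw [← hMcard]
  linarith
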